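/- There exists a 𝕂(q)-algebra antihomomorphism S: U' → U' satisfying S(X) = X^{-1}, S(Y) = 1 + X - YX, S(Z) = 1 + X - ZX; moreover, under the isomorphism θ: U' → U_q(sl2) given by θ(X^{±1}) = K^{±1}, θ(Y) = K^{-1} + F(q - q^{-1}), θ(Z) = K^{-1} - K^{-1}Eq(q - q^{-1}), S corresponds to the standard antipode of U_q(sl2), i.e. θ ∘ S = S_std ∘ θ, where S_std(E) = -K^{-1}E, S_std(F) = -FK, S_std(K) = K^{-1}. -/

import Mathlib

open FreeAlgebra
open scoped TensorProduct

noncomputable section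

/-- The field `𝕂(q)` of rational functions in the indeterminate `q` over `𝕂`. -/
abbrev Kq (K : Type) [Field K] : Type := RatFunc K

/-- The indeterminate `q` viewed as an element of `𝕂(q)`. -/
def qv (K : Type) [Field K] : Kq K := RatFunc.X

/-- Generators `E, F, K, K⁻¹` for the Chevalley presentation of `U_q(sl₂)`. -/
inductive SGen : Type | E | F | K | Kinv

/-- Generators `X, X⁻¹, Y, Z` for the equitable presentation. -/
inductive TGen : Type | X | Xinv | Y | Z

/-- The defining relations of `U_q(sl₂)` in the Chevalley presentation. -/
inductive SRel (K : Type) [Field K] :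
    FreeAlgebra (Kq K) SGen → FreeAlgebra (Kq K) SGen → Prop
  | r1a : SRel K (ι (Kq K) SGen.K * ι (Kq K) SGen.Kinv) 1
  | r1b : SRel K (ι (Kq K) SGen.Kinv * ι (Kq K) SGen.K) 1
  | r2 : SRel K (ι (Kq K) SGen.K * ι (Kq K) SGen.E * ι (Kq K) SGen.Kinv)
      ((qv K ^ 2) • ι (Kq K) SGen.E)
  | r3 : SRel K (ι (Kq K) SGen.K * ι (Kq K) SGen.F * ι (Kq K) SGen.Kinv)
      ((qv K ^ (-2 : ℤ)) • ι (Kq K) SGen.F)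
  | r4 : SRel K (ι (Kq K) SGen.E * ι (Kq K) SGen.F - ι (Kq K) SGen.F * ι (Kq K) SGen.E)
      ((qv K - (qv K)⁻¹)⁻¹ • (ι (Kq K) SGen.K - ι (Kq K) SGen.Kinv))

/-- The defining relations of the equitable presentation. -/
inductive TRel (K : Type) [Field K] :
    FreeAlgebra (Kq K) TGen → FreeAlgebra (Kq K) TGen → Prop
  | e1a : TRel K (ι (Kq K) TGen.X * ι (Kq K) TGen.Xinv) 1
  | e1b : TRel K (ι (Kq K) TGen.Xinv * ι (Kq K) TGen.X) 1
  | e2 : TRel K ((qv K - (qv K)⁻¹)⁻¹ •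
      (qv K • (ι (Kq K) TGen.X * ι (Kq K) TGen.Y) -
        (qv K)⁻¹ • (ι (Kq K) TGen.Y * ι (Kq K) TGen.X))) 1
  | e3 : TRel K ((qv K - (qv K)⁻¹)⁻¹ •
      (qv K • (ι (Kq K) TGen.Y * ι (Kq K) TGen.Z) -
        (qv K)⁻¹ • (ι (Kq K) TGen.Z * ι (Kq K) TGen.Y))) 1
  | e4 : TRel K ((qv K - (qv K)⁻¹)⁻¹ •
      (qv K • (ι (Kq K) TGen.Z * ι (Kq K) TGen.X) -
        (qv K)⁻¹ • (ι (Kq K) TGen.X * ι (Kq K) TGen.Z))) 1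

/-- `U_q(sl₂)` with the Chevalley presentation. -/
abbrev Usl2 (K : Type) [Field K] := RingQuot (SRel K)

/-- The algebra `U'` with the equitable presentation. -/
abbrev Ueq2 (K : Type) [Field K] := RingQuot (TRel K)

def genE (K : Type) [Field K] : Usl2 K := RingQuot.mkAlgHom (Kq K) (SRel K) (ι (Kq K) SGen.E)
def genF (K : Type) [Field K] : Usl2 K := RingQuot.mkAlgHom (Kq K) (SRel K) (ι (Kq K) SGen.F)
def genK (K : Type) [Field K] : Usl2 K := RingQuot.mkAlgHom (Kq K) (SRel K) (ι (Kq K) SGen.K)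
def genKinv (K : Type) [Field K] : Usl2 K := RingQuot.mkAlgHom (Kq K) (SRel K) (ι (Kq K) SGen.Kinv)

def genX (K : Type) [Field K] : Ueq2 K := RingQuot.mkAlgHom (Kq K) (TRel K) (ι (Kq K) TGen.X)
def genXinv (K : Type) [Field K] : Ueq2 K := RingQuot.mkAlgHom (Kq K) (TRel K) (ι (Kq K) TGen.Xinv)
def genY (K : Type) [Field K] : Ueq2 K := RingQuot.mkAlgHom (Kq K) (TRel K) (ι (Kq K) TGen.Y)
def genZ (K : Type) [Field K] : Ueq2 K := RingQuot.mkAlgHom (Kq K) (TRel K) (ι (Kq K) TGen.Z)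

end

section Aux
variable (K : Type) [Field K]

lemma hq_ne : qv K ≠ 0 := RatFunc.X_ne_zero

lemma hc_ne : qv K - (qv K)⁻¹ ≠ 0 := by
  rw [sub_ne_zero]
  intro h
  have h2 : qv K * qv K = 1 := by nth_rewrite 2 [h]; exact mul_inv_cancel₀ (hq_ne K)
  have h3 : (Polynomial.X * Polynomial.X : Polynomial K) = 1 := by
    apply IsFractionRing.injective (Polynomial K) (RatFunc K)
    simpa [qv, RatFunc.algebraMap_X] using h2
  have h4 := congrArg Polynomial.natDegree h3
  simp [← pow_two, Polynomial.natDegree_X_pow] at h4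

lemma relXXi : genX K * genXinv K = 1 := by
  have h := RingQuot.mkAlgHom_rel (Kq K) (TRel.e1a (K := K))
  simpa [genX, genXinv] using h

lemma relXiX : genXinv K * genX K = 1 := by
  have h := RingQuot.mkAlgHom_rel (Kq K) (TRel.e1b (K := K))
  simpa [genX, genXinv] using h

lemma relE2 : qv K • (genX K * genY K) - (qv K)⁻¹ • (genY K * genX K)
    = (qv K - (qv K)⁻¹) • (1 : Ueq2 K) := by
  have h := RingQuot.mkAlgHom_rel (Kq K) (TRel.e2 (K := K))
  simp only [map_smul, map_sub, map_mul, map_one] at h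
  have h2 := congrArg (fun t => (qv K - (qv K)⁻¹) • t) h
  simpa [genX, genY, smul_smul, mul_inv_cancel₀ (hc_ne K)] using h2

lemma relE3 : qv K • (genY K * genZ K) - (qv K)⁻¹ • (genZ K * genY K)
    = (qv K - (qv K)⁻¹) • (1 : Ueq2 K) := by
  have h := RingQuot.mkAlgHom_rel (Kq K) (TRel.e3 (K := K))
  simp only [map_smul, map_sub, map_mul, map_one] at h
  have h2 := congrArg (fun t => (qv K - (qv K)⁻¹) • t) h
  simpa [genY, genZ, smul_smul, mul_inv_cancel₀ (hc_ne K)] using h2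

lemma relE4 : qv K • (genZ K * genX K) - (qv K)⁻¹ • (genX K * genZ K)
    = (qv K - (qv K)⁻¹) • (1 : Ueq2 K) := by
  have h := RingQuot.mkAlgHom_rel (Kq K) (TRel.e4 (K := K))
  simp only [map_smul, map_sub, map_mul, map_one] at h
  have h2 := congrArg (fun t => (qv K - (qv K)⁻¹) • t) h
  simpa [genX, genZ, smul_smul, mul_inv_cancel₀ (hc_ne K)] using h2

end Aux

section AbstractAux
variable {F : Type} [Field F] {A : Type} [Ring A] [Algebra F A]
variable {q : F} {x v y z : A}

lemma smul_cancel {a : F} (ha : a ≠ 0) {u w : A} (h : a • u = w) :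
    u = a⁻¹ • w := by
  rw [← h, smul_smul, inv_mul_cancel₀ ha, one_smul]

section
variable (hq : q ≠ 0) (hxv : x * v = 1) (hvx : v * x = 1)
variable (hE2 : q • (x * y) - q⁻¹ • (y * x) = (q - q⁻¹) • (1 : A))
variable (hE3 : q • (y * z) - q⁻¹ • (z * y) = (q - q⁻¹) • (1 : A))
variable (hE4 : q • (z * x) - q⁻¹ • (x * z) = (q - q⁻¹) • (1 : A))

include hq hE2 in
lemma D1' : x * y = (q⁻¹ * (q - q⁻¹)) • (1 : A) + (q⁻¹ * q⁻¹) • (y * x) := by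
  have h : q • (x * y) = (q - q⁻¹) • (1 : A) + q⁻¹ • (y * x) := sub_eq_iff_eq_add.mp hE2
  have h2 := smul_cancel hq h
  rw [h2, smul_add, smul_smul, smul_smul]

include hq hE4 in
lemma D2' : x * z = (q * q) • (z * x) - (q * (q - q⁻¹)) • (1 : A) := by
  have h : q⁻¹ • (x * z) = q • (z * x) - (q - q⁻¹) • (1 : A) := by
    rw [eq_sub_iff_add_eq, add_comm]
    exact (sub_eq_iff_eq_add.mp hE4).symm
  have h2 := smul_cancel (inv_ne_zero hq) h
  rw [h2, inv_inv, smul_sub, smul_smul, smul_smul]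

include hq hE3 in
lemma D3' : z * y = (q * q) • (y * z) - (q * (q - q⁻¹)) • (1 : A) := by
  have h : q⁻¹ • (z * y) = q • (y * z) - (q - q⁻¹) • (1 : A) := by
    rw [eq_sub_iff_add_eq, add_comm]
    exact (sub_eq_iff_eq_add.mp hE3).symm
  have h2 := smul_cancel (inv_ne_zero hq) h
  rw [h2, inv_inv, smul_sub, smul_smul, smul_smul]

include hq hvx hE2 in
lemma Lvyx' : v * (y * x) = (q * q) • y - (q * (q - q⁻¹)) • v := by
  have h := congrArg (fun t => v * t) hE2
  simp only [mul_sub, mul_smul_comm, mul_one] at h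
  rw [← mul_assoc, hvx, one_mul] at h
  have h2 : q⁻¹ • (v * (y * x)) = q • y - (q - q⁻¹) • v := by
    rw [eq_sub_iff_add_eq, add_comm]
    exact (sub_eq_iff_eq_add.mp h).symm
  have h3 := smul_cancel (inv_ne_zero hq) h2
  rw [h3, inv_inv, smul_sub, smul_smul, smul_smul]

include hq hvx hE4 in
lemma Lvzx' : v * (z * x) = (q⁻¹ * (q - q⁻¹)) • v + (q⁻¹ * q⁻¹) • z := by
  have h := congrArg (fun t => v * t) hE4
  simp only [mul_sub, mul_smul_comm, mul_one] at h
  rw [← mul_assoc v x z, hvx, one_mul] at h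
  have h2 : q • (v * (z * x)) = (q - q⁻¹) • v + q⁻¹ • z := sub_eq_iff_eq_add.mp h
  have h3 := smul_cancel hq h2
  rw [h3, smul_add, smul_smul, smul_smul]

include hq hE2 in
lemma Lxyx' : x * (y * x) = (q⁻¹ * (q - q⁻¹)) • x + (q⁻¹ * q⁻¹) • (y * (x * x)) := by
  rw [← mul_assoc, D1' hq hE2, add_mul, smul_mul_assoc, one_mul, smul_mul_assoc, mul_assoc]

include hq hE4 in
lemma Lxzx' : x * (z * x) = (q * q) • (z * (x * x)) - (q * (q - q⁻¹)) • x := by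
  rw [← mul_assoc, D2' hq hE4, sub_mul, smul_mul_assoc, smul_mul_assoc, one_mul, mul_assoc]

include hq hE3 in
lemma Lzyxx' : z * (y * (x * x))
    = (q * q) • (y * (z * (x * x))) - (q * (q - q⁻¹)) • (x * x) := by
  rw [← mul_assoc, D3' hq hE3, sub_mul, smul_mul_assoc, smul_mul_assoc, one_mul, mul_assoc]

include hq hxv hvx hE2 in
lemma K2' : q • ((1 + x - y * x) * v) - q⁻¹ • (v * (1 + x - y * x))
    = (q - q⁻¹) • (1 : A) := by
  have e1 : (1 + x - y * x) * v = 1 + v - y := by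
    rw [sub_mul, add_mul, one_mul, hxv, mul_assoc, hxv, mul_one]
    abel
  have e2 : v * (1 + x - y * x) = 1 + v - v * (y * x) := by
    rw [mul_sub, mul_add, mul_one, hvx]
    abel
  rw [e1, e2, Lvyx' hq hvx hE2]
  match_scalars <;> field_simp <;> ring

include hq hxv hvx hE4 in
lemma K4' : q • (v * (1 + x - z * x)) - q⁻¹ • ((1 + x - z * x) * v)
    = (q - q⁻¹) • (1 : A) := by
  have e1 : (1 + x - z * x) * v = 1 + v - z := by
    rw [sub_mul, add_mul, one_mul, hxv, mul_assoc, hxv, mul_one]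
    abel
  have e2 : v * (1 + x - z * x) = 1 + v - v * (z * x) := by
    rw [mul_sub, mul_add, mul_one, hvx]
    abel
  rw [e1, e2, Lvzx' hq hvx hE4]
  match_scalars <;> field_simp <;> ring

include hq hE2 hE3 hE4 in
lemma K3' : q • ((1 + x - z * x) * (1 + x - y * x))
    - q⁻¹ • ((1 + x - y * x) * (1 + x - z * x)) = (q - q⁻¹) • (1 : A) := by
  simp only [mul_add, add_mul, mul_sub, sub_mul, mul_one, one_mul, mul_assoc,
    Lxyx' hq hE2, Lxzx' hq hE4, Lzyxx' hq hE3, mul_smul_comm, smul_add, smul_sub, smul_smul]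
  match_scalars <;> field_simp <;> ring

end
end AbstractAux

section MainAux
open MulOpposite
variable (K : Type) [Field K]

/-- Images of the equitable generators under the antipode. -/
noncomputable def Sfun : TGen → (Ueq2 K)ᵐᵒᵖ
  | TGen.X => op (genXinv K)
  | TGen.Xinv => op (genX K)
  | TGen.Y => op (1 + genX K - genY K * genX K)
  | TGen.Z => op (1 + genX K - genZ K * genX K)

lemma Srel : ∀ ⦃a b : FreeAlgebra (Kq K) TGen⦄, TRel K a b →
    FreeAlgebra.lift (Kq K) (Sfun K) a = FreeAlgebra.lift (Kq K) (Sfun K) b := by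
  intro a b h
  have hq := hq_ne K
  have hc := hc_ne K
  have hxv := relXXi K
  have hvx := relXiX K
  cases h <;>
    simp only [map_smul, map_sub, map_mul, map_one, lift_ι_apply, Sfun] <;>
    apply unop_injective <;>
    simp only [unop_smul, unop_sub, unop_mul, unop_one, unop_op]
  · exact hxv
  · exact hvx
  · rw [K2' hq hxv hvx (relE2 K), smul_smul, inv_mul_cancel₀ hc, one_smul]
  · rw [K3' hq (relE2 K) (relE3 K) (relE4 K), smul_smul, inv_mul_cancel₀ hc, one_smul]
  · rw [K4' hq hxv hvx (relE4 K), smul_smul, inv_mul_cancel₀ hc, one_smul]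

/-- The antipode of the equitable presentation. -/
noncomputable def Smap : Ueq2 K →ₐ[Kq K] (Ueq2 K)ᵐᵒᵖ :=
  RingQuot.liftAlgHom (Kq K) ⟨FreeAlgebra.lift (Kq K) (Sfun K), Srel K⟩

lemma Smap_genX : Smap K (genX K) = op (genXinv K) := by
  simp [Smap, genX, RingQuot.liftAlgHom_mkAlgHom_apply, Sfun]

lemma Smap_genXinv : Smap K (genXinv K) = op (genX K) := by
  simp [Smap, genXinv, RingQuot.liftAlgHom_mkAlgHom_apply, Sfun]

lemma Smap_genY : Smap K (genY K) = op (1 + genX K - genY K * genX K) := by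
  simp [Smap, genY, RingQuot.liftAlgHom_mkAlgHom_apply, Sfun]

lemma Smap_genZ : Smap K (genZ K) = op (1 + genX K - genZ K * genX K) := by
  simp [Smap, genZ, RingQuot.liftAlgHom_mkAlgHom_apply, Sfun]

lemma relKKi : genK K * genKinv K = 1 := by
  have h := RingQuot.mkAlgHom_rel (Kq K) (SRel.r1a (K := K))
  simpa [genK, genKinv] using h

lemma relKiK : genKinv K * genK K = 1 := by
  have h := RingQuot.mkAlgHom_rel (Kq K) (SRel.r1b (K := K))
  simpa [genK, genKinv] using h

end MainAux

set_option maxHeartbeats 1000000 in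
set_option synthInstance.maxHeartbeats 1000000 in
open MulOpposite in
/-- There is an algebra antihomomorphism `S` of `U'` (formalized as an
algebra homomorphism `U' → U'ᵐᵒᵖ`) with `S(X) = X⁻¹`, `S(Y) = 1 + X - YX`,
`S(Z) = 1 + X - ZX`; under the isomorphism `θ : U' → U_q(sl₂)` it corresponds to the
standard antipode of `U_q(sl₂)`. -/
theorem equitable_antipode_sl2 (K : Type) [Field K] :
    ∃ S : Ueq2 K →ₐ[Kq K] (Ueq2 K)ᵐᵒᵖ,
      S (genX K) = op (genXinv K) ∧
      S (genY K) = op (1 + genX K - genY K * genX K) ∧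
      S (genZ K) = op (1 + genX K - genZ K * genX K) ∧
      (∀ (θ : Ueq2 K ≃ₐ[Kq K] Usl2 K) (Sstd : Usl2 K →ₐ[Kq K] (Usl2 K)ᵐᵒᵖ),
        (θ (genX K) = genK K ∧ θ (genXinv K) = genKinv K ∧
          θ (genY K) = genKinv K + (qv K - (qv K)⁻¹) • genF K ∧
          θ (genZ K) = genKinv K - (qv K * (qv K - (qv K)⁻¹)) • (genKinv K * genE K)) →
        (Sstd (genE K) = op (-(genKinv K * genE K)) ∧
          Sstd (genF K) = op (-(genF K * genK K)) ∧
          Sstd (genK K) = op (genKinv K)) →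
        ∀ u : Ueq2 K, θ (unop (S u)) = unop (Sstd (θ u))) := by
  refine ⟨Smap K, Smap_genX K, Smap_genY K, Smap_genZ K, ?_⟩
  rintro θ Sstd ⟨hX, hXi, hY, hZ⟩ ⟨hE, hF, hK⟩ u
  -- `Sstd` sends `K⁻¹` to `K`
  have hSKinv : Sstd (genKinv K) = op (genK K) := by
    have h1 : (op (genKinv K) : (Usl2 K)ᵐᵒᵖ) * Sstd (genKinv K) = 1 := by
      rw [← hK, ← map_mul, relKKi, map_one]
    have h2 : unop (Sstd (genKinv K)) * genKinv K = 1 := by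
      have := congrArg unop h1
      simpa using this
    apply unop_injective
    rw [unop_op]
    calc unop (Sstd (genKinv K))
        = unop (Sstd (genKinv K)) * (genKinv K * genK K) := by rw [relKiK, mul_one]
      _ = unop (Sstd (genKinv K)) * genKinv K * genK K := by rw [mul_assoc]
      _ = genK K := by rw [h2, one_mul]
  -- the two algebra maps agree on the generators
  have hcomp : (((AlgHom.op θ.toAlgHom).comp (Smap K)).comp
        (RingQuot.mkAlgHom (Kq K) (TRel K))) = ((Sstd.comp θ.toAlgHom).comp
        (RingQuot.mkAlgHom (Kq K) (TRel K))) := by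
    apply FreeAlgebra.hom_ext
    funext t
    cases t
    · -- X
      show (AlgHom.op θ.toAlgHom) (Smap K (genX K)) = Sstd (θ (genX K))
      rw [Smap_genX, hX, hK]
      simp [hXi]
    · -- Xinv
      show (AlgHom.op θ.toAlgHom) (Smap K (genXinv K)) = Sstd (θ (genXinv K))
      rw [Smap_genXinv, hXi, hSKinv]
      simp [hX]
    · -- Y
      show (AlgHom.op θ.toAlgHom) (Smap K (genY K)) = Sstd (θ (genY K))
      rw [Smap_genY, hY]
      have lhs1 : θ (1 + genX K - genY K * genX K)
          = genK K - (qv K - (qv K)⁻¹) • (genF K * genK K) := by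
        rw [map_sub, map_add, map_one, map_mul, hY, hX, add_mul, smul_mul_assoc, relKiK]
        abel
      rw [map_add, map_smul, hSKinv, hF]
      apply unop_injective
      simp only [AlgHom.op_apply_apply, unop_op, unop_add, unop_smul, unop_neg, unop_mul,
        AlgEquiv.toAlgHom_eq_coe, AlgHom.coe_coe]
      erw [lhs1, smul_neg]
      abel
    · -- Z
      show (AlgHom.op θ.toAlgHom) (Smap K (genZ K)) = Sstd (θ (genZ K))
      rw [Smap_genZ, hZ]
      have lhs1 : θ (1 + genX K - genZ K * genX K)
          = genK K + (qv K * (qv K - (qv K)⁻¹)) • (genKinv K * genE K * genK K) := by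
        rw [map_sub, map_add, map_one, map_mul, hZ, hX, sub_mul, smul_mul_assoc, relKiK]
        abel
      rw [map_sub, map_smul, map_mul, hSKinv, hE]
      apply unop_injective
      simp only [AlgHom.op_apply_apply, unop_op, unop_sub, unop_smul, unop_neg, unop_mul,
        AlgEquiv.toAlgHom_eq_coe, AlgHom.coe_coe]
      have hn : (-(genKinv K * genE K)) * genK K = -(genKinv K * genE K * genK K) :=
        neg_mul (genKinv K * genE K) (genK K)
      erw [lhs1, hn, smul_neg]
      abel
  have hext := RingQuot.ringQuot_ext' (Kq K) _ _ hcomp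
  have happ := AlgHom.congr_fun hext u
  simp only [AlgHom.coe_comp, Function.comp_apply, AlgHom.op_apply_apply,
    AlgEquiv.toAlgHom_eq_coe, AlgHom.coe_coe] at happ
  have := congrArg unop happ
  simpa using this
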